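/- Let d ≥ q ≥ 2 be integers and set B_c = (d+1−q)/(d+1). Define, for real β ≥ 1, h(β) = [1 − (1−B_c)·(β−1)/((q−1)·β + B_c)]^d · [(q−1)·(β^{1/d} − 1) + 1 − B_c] + B_c·β^{1/d}, where β^{1/d} is the real d-th root of β. Then h is strictly increasing on the interval [1, ∞). -/

import Mathlib

set_option maxHeartbeats 1000000

lemma aux_pow_ineq (x : ℝ) (hx : 1 < x) :
    ∀ m : ℕ, 1 ≤ m → ((m : ℝ) + 1) * x ^ m < (m : ℝ) * x ^ (m + 1) + 1 := by
  intro m hm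
  induction m, hm using Nat.le_induction with
  | base =>
    have h : x ^ (1 + 1) = x * x := by ring
    rw [h, pow_one]; push_cast
    nlinarith [mul_pos (sub_pos.mpr hx) (sub_pos.mpr hx)]
  | succ n hn ih =>
    have hy : (1:ℝ) ≤ x ^ n := one_le_pow₀ hx.le
    have hx0 : (0:ℝ) < x := by linarith
    have h1 := mul_lt_mul_of_pos_left ih hx0
    have h3 : (1:ℝ) ≤ x ^ n * x := by nlinarith
    have h2 : 0 ≤ (x - 1) * (x * x ^ n - 1) := mul_nonneg (by linarith) (by nlinarith)
    have e1 : x ^ (n + 1) = x ^ n * x := pow_succ x n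
    have e2 : x ^ (n + 1 + 1) = x ^ n * x * x := by rw [pow_succ, pow_succ]
    rw [e1] at h1
    rw [e1, e2]; push_cast
    nlinarith [h1, h2]

lemma core_pos (k : ℕ) (hk : 1 ≤ k) (r B β x : ℝ)
    (h2r : 2 ≤ r) (hrk : r ≤ (k:ℝ) + 1)
    (hB : B = ((k:ℝ) + 2 - r) / ((k:ℝ) + 2))
    (hβ : 1 < β) (hx : 1 < x) (hxd : x ^ (k + 1) = β) :
    0 < ((k:ℝ) + 1) * (1 - (1 - B) * (β - 1) / ((r - 1) * β + B)) ^ k *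
            -(((1 - B) * 1 * ((r - 1) * β + B) - (1 - B) * (β - 1) * ((r - 1) * 1))
              / ((r - 1) * β + B) ^ 2) *
          ((r - 1) * (x - 1) + 1 - B) +
        (1 - (1 - B) * (β - 1) / ((r - 1) * β + B)) ^ (k + 1) *
          ((r - 1) * (1 / ((k:ℝ) + 1) * (x / β))) +
        B * (1 / ((k:ℝ) + 1) * (x / β)) := by
  have hk1 : (1:ℝ) ≤ (k:ℝ) := by exact_mod_cast hk
  have hβ0 : (0:ℝ) < β := by linarith
  have hx0 : (0:ℝ) < x := by linarith
  have hB0 : 0 < B := by rw [hB]; apply div_pos <;> linarith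
  have hB1 : B < 1 := by rw [hB, div_lt_one (by linarith)]; linarith
  set D : ℝ := (r - 1) * β + B with hD
  set N : ℝ := (r - 2 + B) * β + 1 with hN
  set s : ℝ := r - 1 + B with hs
  set C : ℝ := (r - 1) * (x - 1) + 1 - B with hC
  have hDpos : 0 < D := by rw [hD]; nlinarith
  have hNpos : 0 < N := by rw [hN]; nlinarith
  have hspos : 0 < s := by rw [hs]; linarith
  have hCpos : 0 < C := by rw [hC]; nlinarith
  have hsid : ((k:ℝ) + 1) * (1 - B) = s := by rw [hs, hB]; field_simp; ring
  -- Bernoulli for x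
  have hBern_x : 1 + ((k:ℝ) + 1) * (x - 1) ≤ β := by
    have h1 := one_add_mul_le_pow (a := x - 1) (by linarith) (k + 1)
    have h2 : (1:ℝ) + (x - 1) = x := by ring
    rw [h2, hxd] at h1
    push_cast at h1
    linarith
  -- F1 : (k+1) C ≤ D
  have hF1 : ((k:ℝ) + 1) * C ≤ D := by
    have hm := mul_le_mul_of_nonneg_left hBern_x (show (0:ℝ) ≤ r - 1 by linarith)
    rw [hC, hD]
    nlinarith [hsid]
  -- Bernoulli for D/N
  have hND : N ≤ D := by rw [hN, hD]; nlinarith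
  have hBern_t : N ^ k * (N + ((k:ℝ) + 1) * (D - N)) ≤ D ^ (k + 1) := by
    have ha : (0:ℝ) ≤ (D - N) / N := div_nonneg (by linarith) hNpos.le
    have h1 := one_add_mul_le_pow (a := (D - N) / N) (by linarith) (k + 1)
    have h2 : (1:ℝ) + (D - N) / N = D / N := by field_simp; ring
    rw [h2, div_pow] at h1
    have h3 := mul_le_mul_of_nonneg_right h1 (pow_pos hNpos (k + 1)).le
    have h4 : D ^ (k + 1) / N ^ (k + 1) * N ^ (k + 1) = D ^ (k + 1) :=
      div_mul_cancel₀ _ (pow_ne_zero _ hNpos.ne')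
    have h5 : (1 + ((k + 1 : ℕ):ℝ) * ((D - N) / N)) * N ^ (k + 1)
        = N ^ k * (N + ((k:ℝ) + 1) * (D - N)) := by
      field_simp
      push_cast
      ring
    rw [h4, h5] at h3
    exact h3
  -- strict inequality F2
  have haux := aux_pow_ineq x hx k hk
  have hxd' : x ^ (k + 1) = β := hxd
  have hid2 : s * ((k:ℝ) * β + 1) = ((k:ℝ) + 1) * (N + B * (β - 1)) := by
    rw [hs, hN, hB]; field_simp; ring
  have h7 : s * x ^ k < N + B * (β - 1) := by
    rw [hxd] at haux
    have h6 := mul_lt_mul_of_pos_left haux hspos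
    rw [hid2] at h6
    have := lt_of_mul_lt_mul_left (a := (k:ℝ) + 1)
      (by calc ((k:ℝ) + 1) * (s * x ^ k) = s * (((k:ℝ) + 1) * x ^ k) := by ring
          _ < ((k:ℝ) + 1) * (N + B * (β - 1)) := h6)
      (by positivity)
    exact this
  have hid3 : s * N ^ k * (N + B * (β - 1))
      = B * (N ^ k * (N + ((k:ℝ) + 1) * (D - N))) + (r - 1) * N ^ (k + 1) := by
    have hk2 : (k:ℝ) + 2 ≠ 0 := by positivity
    have hB2 : B * ((k:ℝ) + 2) = (k:ℝ) + 2 - r := by rw [hB, div_mul_cancel₀ _ hk2]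
    rw [hs, hN, hD]; linear_combination (((r - 2 + B) * β + 1) ^ k * B * (β - 1)) * hB2
  have hF2 : s ^ 2 * x ^ k * N ^ k < B * D ^ (k + 1) + (r - 1) * N ^ (k + 1) := by
    have h8 := mul_lt_mul_of_pos_left h7 (mul_pos hspos (pow_pos hNpos k))
    have h9 := mul_le_mul_of_nonneg_left hBern_t hB0.le
    calc s ^ 2 * x ^ k * N ^ k = s * N ^ k * (s * x ^ k) := by ring
      _ < s * N ^ k * (N + B * (β - 1)) := h8
      _ = B * (N ^ k * (N + ((k:ℝ) + 1) * (D - N))) + (r - 1) * N ^ (k + 1) := hid3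
      _ ≤ B * D ^ (k + 1) + (r - 1) * N ^ (k + 1) := by linarith
  -- combine into E > 0
  have hE : 0 < x * ((r - 1) * N ^ (k + 1) * D + B * D ^ (k + 2))
      - ((k:ℝ) + 1) * β * s ^ 2 * C * N ^ k := by
    have m1 := mul_le_mul_of_nonneg_right hF1
      (show 0 ≤ β * s ^ 2 * N ^ k by positivity)
    have m2 := mul_lt_mul_of_pos_right hF2 (mul_pos hx0 hDpos)
    have e3 : s ^ 2 * x ^ k * N ^ k * (x * D) = β * s ^ 2 * N ^ k * D := by
      rw [← hxd]; ring
    have e4 : (B * D ^ (k + 1) + (r - 1) * N ^ (k + 1)) * (x * D)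
        = x * ((r - 1) * N ^ (k + 1) * D + B * D ^ (k + 2)) := by ring
    rw [e3, e4] at m2
    nlinarith [m1, m2]
  -- final algebraic identity
  have hM : (0:ℝ) < ((k:ℝ) + 1) * β * D ^ (k + 2) := by positivity
  have hE2 : 0 < x * ((r - 1) * N ^ (k + 1) * D + B * D ^ (k + 2))
      - ((k:ℝ) + 1) * (((k:ℝ) + 1) * (1 - B)) * β * (r - 1 + B) * C * N ^ k := by
    rw [hsid, ← hs]
    nlinarith [hE]
  have key : ((k:ℝ) + 1) * (1 - (1 - B) * (β - 1) / D) ^ k *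
            -(((1 - B) * 1 * D - (1 - B) * (β - 1) * ((r - 1) * 1)) / D ^ 2) * C +
        (1 - (1 - B) * (β - 1) / D) ^ (k + 1) * ((r - 1) * (1 / ((k:ℝ) + 1) * (x / β))) +
        B * (1 / ((k:ℝ) + 1) * (x / β))
      = (x * ((r - 1) * N ^ (k + 1) * D + B * D ^ (k + 2))
          - ((k:ℝ) + 1) * (((k:ℝ) + 1) * (1 - B)) * β * (r - 1 + B) * C * N ^ k)
          / (((k:ℝ) + 1) * β * D ^ (k + 2)) := by
    have hAe : 1 - (1 - B) * (β - 1) / D = N / D := by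
      have hD0 : β * (r - 1) + B ≠ 0 := by rw [mul_comm]; exact hDpos.ne'
      rw [hN, hD]; field_simp; ring
    have hD' : D ≠ 0 := hDpos.ne'
    have hβ' : β ≠ 0 := hβ0.ne'
    rw [hAe, div_pow, div_pow]
    field_simp
    rw [hN, hD, hC]
    ring
  rw [key]
  exact div_pos hE2 hM


/-- with B_c = (d+1−q)/(d+1), the function
h(β) = [1 − (1−B_c)(β−1)/((q−1)β + B_c)]^d · [(q−1)(β^{1/d} − 1) + 1 − B_c] + B_c·β^{1/d}
is strictly increasing on [1, ∞). -/
theorem potts_uniqueness_h_strict_mono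
    (d q : ℕ) (hq : 2 ≤ q) (hdq : q ≤ d) :
    StrictMonoOn (fun β : ℝ =>
      (1 - (1 - ((d : ℝ) + 1 - (q : ℝ)) / ((d : ℝ) + 1)) * (β - 1)
          / (((q : ℝ) - 1) * β + ((d : ℝ) + 1 - (q : ℝ)) / ((d : ℝ) + 1))) ^ d
        * (((q : ℝ) - 1) * (β ^ (1 / (d : ℝ)) - 1)
            + 1 - ((d : ℝ) + 1 - (q : ℝ)) / ((d : ℝ) + 1))
        + (((d : ℝ) + 1 - (q : ℝ)) / ((d : ℝ) + 1)) * β ^ (1 / (d : ℝ)))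
      (Set.Ici 1) := by
  have hq2 : (2:ℝ) ≤ (q:ℝ) := by exact_mod_cast hq
  have hqd : (q:ℝ) ≤ (d:ℝ) := by exact_mod_cast hdq
  have hd2' : (2:ℝ) ≤ (d:ℝ) := by exact_mod_cast hq.trans hdq
  have hB0 : 0 < ((d:ℝ) + 1 - (q:ℝ)) / ((d:ℝ) + 1) := by
    apply div_pos <;> linarith
  apply strictMonoOn_of_deriv_pos (convex_Ici 1)
  · -- continuity
    have hD : ∀ β ∈ Set.Ici (1:ℝ),
        ((q:ℝ) - 1) * β + ((d:ℝ) + 1 - (q:ℝ)) / ((d:ℝ) + 1) ≠ 0 := by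
      intro β hβ
      have h1 : (1:ℝ) ≤ β := hβ
      nlinarith
    have hrp : ContinuousOn (fun β : ℝ => β ^ (1 / (d:ℝ))) (Set.Ici 1) :=
      continuousOn_id.rpow_const (fun x _ => Or.inr (by positivity))
    have hDc : ContinuousOn (fun β : ℝ => ((q:ℝ) - 1) * β
        + ((d:ℝ) + 1 - (q:ℝ)) / ((d:ℝ) + 1)) (Set.Ici 1) :=
      (continuousOn_const.mul continuousOn_id).add continuousOn_const
    have h1 : ContinuousOn (fun β : ℝ => 1 - (1 - ((d:ℝ) + 1 - (q:ℝ)) / ((d:ℝ) + 1)) * (β - 1)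
        / (((q:ℝ) - 1) * β + ((d:ℝ) + 1 - (q:ℝ)) / ((d:ℝ) + 1))) (Set.Ici 1) :=
      continuousOn_const.sub
        ((continuousOn_const.mul (continuousOn_id.sub continuousOn_const)).div hDc hD)
    exact ((h1.pow d).mul
      ((((hrp.sub continuousOn_const).const_smul ((q:ℝ) - 1)).add continuousOn_const).sub
        continuousOn_const)).add (hrp.const_smul (((d:ℝ) + 1 - (q:ℝ)) / ((d:ℝ) + 1)))
  · intro β hβ
    rw [interior_Ici] at hβ
    have hβ1 : (1:ℝ) < β := hβ
    have hβ0 : (0:ℝ) < β := by linarith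
    -- derivative
    have hDpos : 0 < ((q:ℝ) - 1) * β + ((d:ℝ) + 1 - (q:ℝ)) / ((d:ℝ) + 1) := by nlinarith
    set B : ℝ := ((d:ℝ) + 1 - (q:ℝ)) / ((d:ℝ) + 1) with hBdef
    have hu : HasDerivAt (fun b : ℝ => (1 - B) * (b - 1)) ((1 - B) * 1) β :=
      ((hasDerivAt_id β).sub_const 1).const_mul (1 - B)
    have hv : HasDerivAt (fun b : ℝ => ((q:ℝ) - 1) * b + B) (((q:ℝ) - 1) * 1) β :=
      ((hasDerivAt_id β).const_mul ((q:ℝ) - 1)).add_const B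
    have hg1 : HasDerivAt (fun b : ℝ => 1 - (1 - B) * (b - 1) / (((q:ℝ) - 1) * b + B))
        (-(((1 - B) * 1 * (((q:ℝ) - 1) * β + B) - (1 - B) * (β - 1) * (((q:ℝ) - 1) * 1))
          / (((q:ℝ) - 1) * β + B) ^ 2)) β :=
      (hu.div hv hDpos.ne').const_sub 1
    have hp : HasDerivAt (fun b : ℝ => b ^ (1 / (d:ℝ)))
        ((1 / (d:ℝ)) * β ^ (1 / (d:ℝ) - 1)) β :=
      Real.hasDerivAt_rpow_const (Or.inl hβ0.ne')
    have hC : HasDerivAt (fun b : ℝ => ((q:ℝ) - 1) * (b ^ (1 / (d:ℝ)) - 1) + 1 - B)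
        (((q:ℝ) - 1) * ((1 / (d:ℝ)) * β ^ (1 / (d:ℝ) - 1))) β :=
      (((hp.sub_const 1).const_mul ((q:ℝ) - 1)).add_const 1).sub_const B
    have hfull := ((hg1.pow d).mul hC).add (hp.const_mul B)
    rw [show deriv (fun β : ℝ => (1 - (1 - B) * (β - 1) / (((q:ℝ) - 1) * β + B)) ^ d
        * (((q:ℝ) - 1) * (β ^ (1 / (d:ℝ)) - 1) + 1 - B) + B * β ^ (1 / (d:ℝ))) β = _ from hfull.deriv]
    -- rewrite rpow pieces
    have hrw : β ^ (1 / (d:ℝ) - 1) = β ^ (1 / (d:ℝ)) / β := by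
      rw [Real.rpow_sub hβ0, Real.rpow_one]
    rw [hrw]
    obtain ⟨k, rfl⟩ : ∃ k, d = k + 1 := ⟨d - 1, by omega⟩
    have hk : 1 ≤ k := by omega
    simp only [Nat.add_sub_cancel]
    have hcast : ((k + 1 : ℕ):ℝ) = (k:ℝ) + 1 := by push_cast; ring
    rw [hcast]
    have hx1 : 1 < β ^ (1 / ((k:ℝ) + 1)) :=
      (Real.one_lt_rpow_iff_of_pos hβ0).mpr (Or.inl ⟨hβ1, by positivity⟩)
    have hxd : (β ^ (1 / ((k:ℝ) + 1))) ^ (k + 1) = β := by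
      rw [← Real.rpow_natCast (β ^ (1 / ((k:ℝ) + 1))) (k + 1),
        ← Real.rpow_mul hβ0.le, hcast,
        show (1 / ((k:ℝ) + 1)) * ((k:ℝ) + 1) = 1 by field_simp, Real.rpow_one]
    have hrk : (q:ℝ) ≤ (k:ℝ) + 1 := by rw [← hcast]; exact_mod_cast hdq
    have hB' : B = ((k:ℝ) + 2 - (q:ℝ)) / ((k:ℝ) + 2) := by
      rw [hBdef, hcast]; ring_nf
    exact core_pos k hk (q:ℝ) B β (β ^ (1 / ((k:ℝ) + 1))) hq2 hrk hB' hβ1 hx1 hxd
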